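/- For j ∈ {0,...,k}, let a_j(k) be the sum, over all down-sets D of H(C_2,C_k) with D ∩ {(i,k) : 1 ≤ i ≤ k} = {(i,k) : 1 ≤ i ≤ j}, of the number of down-sets E of H(C_2,C_k) with E ⊆ D. Then a_0(1) = 1, a_1(1) = 2, and for every k ≥ 2: a_0(k) = a_1(k) = h(H(C_2,C_{k−1})); a_j(k) = Σ_{i=j−1}^{k−1} a_i(k−1) for every j ∈ {1,...,k−1}; and a_k(k) = 2^k. -/

import Mathlib

attribute [local instance] Classical.propDecidable

/-- `H(C₂,C_k)`, identified with `{(x,y) : 1 ≤ x ≤ y ≤ k}` under the componentwise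
order (0-indexed via `Fin k`). -/
def Hk (k : ℕ) := {p : Fin k × Fin k // p.1 ≤ p.2}

instance (k : ℕ) : PartialOrder (Hk k) := Subtype.partialOrder _

noncomputable instance (k : ℕ) : Fintype (Hk k) :=
  Subtype.fintype _

/-- The down-sets of `H(C₂,C_k)`, as finite sets. -/
noncomputable def dsHk (k : ℕ) : Finset (Finset (Hk k)) :=
  Finset.univ.filter fun D => ∀ a b : Hk k, a ≤ b → b ∈ D → a ∈ D

/-- The element `(i,k)` of `H(C₂,C_k)` (0-indexed: `(i, k-1)`). -/
def topEl (k : ℕ) (i : Fin k) : Hk k :=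
  ⟨(i, ⟨k - 1, by have := i.isLt; omega⟩), by
    have := i.isLt; exact Fin.le_def.mpr (by simp; omega)⟩

/-- `a_j(k)`: the sum, over all down-sets `D` of `H(C₂,C_k)` with
`D ∩ {(i,k) : 1 ≤ i ≤ k} = {(i,k) : 1 ≤ i ≤ j}`, of the number of down-sets `E`
of `H(C₂,C_k)` with `E ⊆ D`. -/
noncomputable def aH (k j : ℕ) : ℕ :=
  ∑ D ∈ (dsHk k).filter (fun D => ∀ i : Fin k, (topEl k i ∈ D ↔ (i : ℕ) < j)),
    ((dsHk k).filter fun E => E ⊆ D).card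

/-! ### Auxiliary material -/

open Finset

section Aux

variable {k m : ℕ}

lemma hk_le_iff {k : ℕ} {a b : Hk k} :
    a ≤ b ↔ ((a.1.1 : ℕ) ≤ (b.1.1 : ℕ) ∧ (a.1.2 : ℕ) ≤ (b.1.2 : ℕ)) := by
  show a.1 ≤ b.1 ↔ _
  rw [Prod.le_def, Fin.le_def, Fin.le_def]

lemma hk_ext {a b : Hk k} (h1 : (a.1.1 : ℕ) = (b.1.1 : ℕ))
    (h2 : (a.1.2 : ℕ) = (b.1.2 : ℕ)) : a = b := by
  apply Subtype.ext
  apply Prod.ext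
  · exact Fin.ext h1
  · exact Fin.ext h2

lemma hk_prop (b : Hk k) : (b.1.1 : ℕ) ≤ (b.1.2 : ℕ) := b.2

/-- constructor -/
def mkHk {k : ℕ} (x y : ℕ) (hxy : x ≤ y) (hy : y < k) : Hk k :=
  ⟨(⟨x, lt_of_le_of_lt hxy hy⟩, ⟨y, hy⟩), Fin.mk_le_mk.mpr hxy⟩

@[simp] lemma mkHk_fst {x y : ℕ} (hxy : x ≤ y) (hy : y < k) :
    ((mkHk x y hxy hy).1.1 : ℕ) = x := rfl

@[simp] lemma mkHk_snd {x y : ℕ} (hxy : x ≤ y) (hy : y < k) :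
    ((mkHk x y hxy hy).1.2 : ℕ) = y := rfl

@[simp] lemma topEl_fst (i : Fin k) : ((topEl k i).1.1 : ℕ) = (i : ℕ) := rfl

@[simp] lemma topEl_snd (i : Fin k) : ((topEl k i).1.2 : ℕ) = k - 1 := rfl

lemma le_topEl (a : Hk k) : a ≤ topEl k a.1.1 := by
  rw [hk_le_iff, topEl_fst, topEl_snd]
  have := a.1.2.isLt
  exact ⟨le_rfl, by omega⟩

lemma topEl_mono {i i' : Fin k} (h : (i : ℕ) ≤ (i' : ℕ)) : topEl k i ≤ topEl k i' := by
  rw [hk_le_iff, topEl_fst, topEl_fst, topEl_snd, topEl_snd]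
  exact ⟨h, le_rfl⟩

lemma eq_topEl_of_snd {b : Hk m} (h : (b.1.2 : ℕ) = m - 1) : b = topEl m b.1.1 := by
  apply hk_ext
  · rfl
  · rw [topEl_snd]; exact h

/-- column embedding `Hk k → Hk (k+1)` (identity on values). -/
def colE {k : ℕ} (a : Hk k) : Hk (k + 1) :=
  mkHk (a.1.1 : ℕ) (a.1.2 : ℕ) (hk_prop a) (lt_trans a.1.2.isLt (Nat.lt_succ_self k))

/-- row embedding `Hk k → Hk (k+1)` (shift both coordinates by one). -/
def rowE {k : ℕ} (a : Hk k) : Hk (k + 1) :=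
  mkHk ((a.1.1 : ℕ) + 1) ((a.1.2 : ℕ) + 1) (Nat.succ_le_succ (hk_prop a))
    (Nat.succ_lt_succ a.1.2.isLt)

@[simp] lemma colE_fst (a : Hk k) : ((colE a).1.1 : ℕ) = (a.1.1 : ℕ) := rfl
@[simp] lemma colE_snd (a : Hk k) : ((colE a).1.2 : ℕ) = (a.1.2 : ℕ) := rfl
@[simp] lemma rowE_fst (a : Hk k) : ((rowE a).1.1 : ℕ) = (a.1.1 : ℕ) + 1 := rfl
@[simp] lemma rowE_snd (a : Hk k) : ((rowE a).1.2 : ℕ) = (a.1.2 : ℕ) + 1 := rfl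

lemma colE_le_iff {a b : Hk k} : colE a ≤ colE b ↔ a ≤ b := by
  rw [hk_le_iff, hk_le_iff (a := a), colE_fst, colE_fst, colE_snd, colE_snd]

lemma rowE_le_iff {a b : Hk k} : rowE a ≤ rowE b ↔ a ≤ b := by
  rw [hk_le_iff, hk_le_iff (a := a), rowE_fst, rowE_fst, rowE_snd, rowE_snd]
  omega

lemma colE_inj {a b : Hk k} (h : colE a = colE b) : a = b := by
  apply hk_ext
  · have := congrArg (fun x : Hk (k + 1) => (x.1.1 : ℕ)) h
    simpa using this
  · have := congrArg (fun x : Hk (k + 1) => (x.1.2 : ℕ)) h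
    simpa using this

lemma rowE_inj {a b : Hk k} (h : rowE a = rowE b) : a = b := by
  apply hk_ext
  · have := congrArg (fun x : Hk (k + 1) => (x.1.1 : ℕ)) h
    simp only [rowE_fst] at this; omega
  · have := congrArg (fun x : Hk (k + 1) => (x.1.2 : ℕ)) h
    simp only [rowE_snd] at this; omega

lemma eq_colE_of_snd_lt {b : Hk (k + 1)} (h : (b.1.2 : ℕ) < k) : ∃ c, b = colE c := by
  refine ⟨mkHk (b.1.1 : ℕ) (b.1.2 : ℕ) (hk_prop b) h, ?_⟩
  apply hk_ext <;> simp [colE]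

lemma eq_rowE_of_fst_pos {b : Hk (k + 1)} (h : 0 < (b.1.1 : ℕ)) : ∃ c, b = rowE c := by
  have hb := hk_prop b
  have hb2 := b.1.2.isLt
  refine ⟨mkHk ((b.1.1 : ℕ) - 1) ((b.1.2 : ℕ) - 1) (by omega) (by omega), ?_⟩
  apply hk_ext <;> simp [rowE] <;> omega

lemma lt_colE {b : Hk (k + 1)} {a : Hk k} (h : b ≤ colE a) : ∃ c, b = colE c ∧ c ≤ a := by
  rw [hk_le_iff, colE_fst, colE_snd] at h
  have hy : (b.1.2 : ℕ) < k := lt_of_le_of_lt h.2 a.1.2.isLt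
  obtain ⟨c, rfl⟩ := eq_colE_of_snd_lt hy
  refine ⟨c, rfl, ?_⟩
  rw [hk_le_iff]
  rw [colE_fst, colE_snd] at h
  exact h

lemma rowE_le {a : Hk k} {b : Hk (k + 1)} (h : rowE a ≤ b) : ∃ c, b = rowE c ∧ a ≤ c := by
  rw [hk_le_iff, rowE_fst, rowE_snd] at h
  obtain ⟨c, rfl⟩ := eq_rowE_of_fst_pos (show 0 < (b.1.1 : ℕ) by omega)
  refine ⟨c, rfl, ?_⟩
  rw [hk_le_iff]
  rw [rowE_fst, rowE_snd] at h
  omega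

/-- down-set predicate -/
def isDS {k : ℕ} (D : Finset (Hk k)) : Prop :=
  ∀ a b : Hk k, a ≤ b → b ∈ D → a ∈ D

lemma mem_dsHk {D : Finset (Hk k)} : D ∈ dsHk k ↔ isDS D := by
  simp [dsHk, isDS]

/-- top column restriction -/
noncomputable def colR {k : ℕ} (D : Finset (Hk (k + 1))) : Finset (Hk k) :=
  Finset.univ.filter fun a => colE a ∈ D

noncomputable def rowR {k : ℕ} (D : Finset (Hk (k + 1))) : Finset (Hk k) :=
  Finset.univ.filter fun a => rowE a ∈ D

noncomputable def colL {k : ℕ} (E : Finset (Hk k)) (j : ℕ) : Finset (Hk (k + 1)) :=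
  Finset.univ.filter fun b => (∃ a ∈ E, b = colE a) ∨ ((b.1.2 : ℕ) = k ∧ (b.1.1 : ℕ) < j)

noncomputable def rowL {k : ℕ} (E : Finset (Hk k)) : Finset (Hk (k + 1)) :=
  Finset.univ.filter fun b => (∃ a ∈ E, b = rowE a) ∨ (b.1.1 : ℕ) = 0

@[simp] lemma mem_colR {D : Finset (Hk (k + 1))} {a : Hk k} :
    a ∈ colR D ↔ colE a ∈ D := by simp [colR]

@[simp] lemma mem_rowR {D : Finset (Hk (k + 1))} {a : Hk k} :
    a ∈ rowR D ↔ rowE a ∈ D := by simp [rowR]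

lemma mem_colL {E : Finset (Hk k)} {j : ℕ} {b : Hk (k + 1)} :
    b ∈ colL E j ↔ ((∃ a ∈ E, b = colE a) ∨ ((b.1.2 : ℕ) = k ∧ (b.1.1 : ℕ) < j)) := by
  simp [colL]

lemma mem_rowL {E : Finset (Hk k)} {b : Hk (k + 1)} :
    b ∈ rowL E ↔ ((∃ a ∈ E, b = rowE a) ∨ (b.1.1 : ℕ) = 0) := by
  simp [rowL]

lemma colE_mem_colL {E : Finset (Hk k)} {j : ℕ} {a : Hk k} :
    colE a ∈ colL E j ↔ a ∈ E := by
  rw [mem_colL]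
  constructor
  · rintro (⟨c, hc, h⟩ | ⟨h2, _⟩)
    · rwa [colE_inj h]
    · rw [colE_snd] at h2
      have := a.1.2.isLt; omega
  · intro ha; exact Or.inl ⟨a, ha, rfl⟩

lemma rowE_mem_rowL {E : Finset (Hk k)} {a : Hk k} :
    rowE a ∈ rowL E ↔ a ∈ E := by
  rw [mem_rowL]
  constructor
  · rintro (⟨c, hc, h⟩ | h0)
    · rwa [rowE_inj h]
    · rw [rowE_fst] at h0; omega
  · intro ha; exact Or.inl ⟨a, ha, rfl⟩

lemma topEl_mem_colL {E : Finset (Hk k)} {j : ℕ} (i : Fin (k + 1)) :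
    topEl (k + 1) i ∈ colL E j ↔ (i : ℕ) < j := by
  rw [mem_colL]
  constructor
  · rintro (⟨a, ha, h⟩ | ⟨_, h1⟩)
    · exfalso
      have := congrArg (fun x : Hk (k + 1) => (x.1.2 : ℕ)) h
      simp only [topEl_snd, colE_snd] at this
      have := a.1.2.isLt; omega
    · rwa [topEl_fst] at h1
  · intro h
    exact Or.inr ⟨by rw [topEl_snd]; omega, by rwa [topEl_fst]⟩

lemma colR_colL (E : Finset (Hk k)) (j : ℕ) : colR (colL E j) = E := by
  ext a
  rw [mem_colR, colE_mem_colL]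

lemma rowR_rowL (E : Finset (Hk k)) : rowR (rowL E) = E := by
  ext a
  rw [mem_rowR, rowE_mem_rowL]

lemma isDS_colR {D : Finset (Hk (k + 1))} (hD : isDS D) : isDS (colR D) := by
  intro a b hab hb
  rw [mem_colR] at hb ⊢
  exact hD _ _ (colE_le_iff.mpr hab) hb

lemma isDS_rowR {D : Finset (Hk (k + 1))} (hD : isDS D) : isDS (rowR D) := by
  intro a b hab hb
  rw [mem_rowR] at hb ⊢
  exact hD _ _ (rowE_le_iff.mpr hab) hb

lemma colR_mono {E D : Finset (Hk (k + 1))} (h : E ⊆ D) : colR E ⊆ colR D := by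
  intro a ha
  rw [mem_colR] at ha ⊢
  exact h ha

lemma rowR_mono {E D : Finset (Hk (k + 1))} (h : E ⊆ D) : rowR E ⊆ rowR D := by
  intro a ha
  rw [mem_rowR] at ha ⊢
  exact h ha

lemma isDS_colL {E : Finset (Hk k)} {j : ℕ} (hE : isDS E)
    (hj : ∀ i : Fin k, (i : ℕ) < j → topEl k i ∈ E) : isDS (colL E j) := by
  intro a b hab hb
  rw [mem_colL] at hb ⊢
  rcases hb with ⟨c, hc, rfl⟩ | ⟨h2, h1⟩
  · obtain ⟨c', rfl, hcc⟩ := lt_colE hab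
    exact Or.inl ⟨c', hE _ _ hcc hc, rfl⟩
  · have hab' := hk_le_iff.mp hab
    by_cases ha : (a.1.2 : ℕ) = k
    · exact Or.inr ⟨ha, by omega⟩
    · have hlt : (a.1.2 : ℕ) < k := by have := a.1.2.isLt; omega
      obtain ⟨c', rfl⟩ := eq_colE_of_snd_lt hlt
      refine Or.inl ⟨c', hE _ _ (le_topEl c') (hj c'.1.1 ?_), rfl⟩
      have := hab'.1
      rw [colE_fst] at this
      omega

lemma isDS_rowL {E : Finset (Hk k)} (hE : isDS E) : isDS (rowL E) := by
  intro a b hab hb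
  rw [mem_rowL] at hb ⊢
  by_cases ha : (a.1.1 : ℕ) = 0
  · exact Or.inr ha
  · rcases hb with ⟨c, hc, rfl⟩ | h0
    · obtain ⟨c', rfl⟩ := eq_rowE_of_fst_pos (b := a) (by omega)
      refine Or.inl ⟨c', hE _ _ (rowE_le_iff.mp hab) hc, rfl⟩
    · exfalso
      have := (hk_le_iff.mp hab).1
      omega

lemma colL_colR {D : Finset (Hk (k + 1))} {j : ℕ} (hD : isDS D)
    (hj : ∀ i : Fin (k + 1), topEl (k + 1) i ∈ D ↔ (i : ℕ) < j) :
    colL (colR D) j = D := by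
  ext b
  by_cases hb : (b.1.2 : ℕ) = k
  · have hbt : b = topEl (k + 1) b.1.1 := eq_topEl_of_snd (by omega)
    rw [mem_colL]
    constructor
    · rintro (⟨a, ha, rfl⟩ | ⟨_, h1⟩)
      · rwa [mem_colR] at ha
      · rw [hbt]
        exact (hj _).mpr h1
    · intro hbD
      refine Or.inr ⟨hb, ?_⟩
      have := (hj b.1.1).mp (hbt ▸ hbD)
      exact this
  · have hlt : (b.1.2 : ℕ) < k := by have := b.1.2.isLt; omega
    obtain ⟨c, rfl⟩ := eq_colE_of_snd_lt hlt
    rw [colE_mem_colL, mem_colR]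

lemma rowL_rowR {D : Finset (Hk (k + 1))} (hD : isDS D)
    (h0 : topEl (k + 1) 0 ∈ D) : rowL (rowR D) = D := by
  ext b
  rw [mem_rowL]
  constructor
  · rintro (⟨a, ha, rfl⟩ | h0')
    · rwa [mem_rowR] at ha
    · have hb1 : b.1.1 = (0 : Fin (k + 1)) := Fin.ext (by simpa using h0')
      have hle := le_topEl b
      rw [hb1] at hle
      exact hD _ _ hle h0
  · intro hb
    by_cases h1 : (b.1.1 : ℕ) = 0
    · exact Or.inr h1
    · obtain ⟨c, rfl⟩ := eq_rowE_of_fst_pos (b := b) (by omega)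
      exact Or.inl ⟨c, by rwa [mem_rowR], rfl⟩

/-- transport of top-column conditions along `colR` -/
lemma colR_topcond {D : Finset (Hk (k + 1))} {j : ℕ} (hD : isDS D)
    (hj : ∀ i : Fin (k + 1), topEl (k + 1) i ∈ D ↔ (i : ℕ) < j) :
    ∀ i' : Fin k, (i' : ℕ) < j → topEl k i' ∈ colR D := by
  intro i' hi'
  rw [mem_colR]
  have h1 : colE (topEl k i') ≤ topEl (k + 1) ⟨(i' : ℕ), lt_trans i'.isLt (Nat.lt_succ_self k)⟩ := by
    rw [hk_le_iff, colE_fst, colE_snd, topEl_fst, topEl_snd, topEl_fst, topEl_snd]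
    constructor
    · rfl
    · omega
  refine hD _ _ h1 ((hj _).mpr ?_)
  simpa using hi'

lemma rowE_topEl (i' : Fin k) :
    rowE (topEl k i') = topEl (k + 1) i'.succ := by
  have hk0 : 0 < k := i'.pos
  apply hk_ext
  · rw [rowE_fst, topEl_fst, topEl_fst, Fin.val_succ]
  · rw [rowE_snd, topEl_snd, topEl_snd]
    omega

lemma rowR_topcond {D : Finset (Hk (k + 1))} {j : ℕ} (hj1 : 1 ≤ j)
    (hj : ∀ i : Fin (k + 1), topEl (k + 1) i ∈ D ↔ (i : ℕ) < j) :
    ∀ i' : Fin k, topEl k i' ∈ rowR D ↔ (i' : ℕ) < j - 1 := by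
  intro i'
  rw [mem_rowR, rowE_topEl, hj, Fin.val_succ]
  omega

lemma rowL_topcond {D' : Finset (Hk k)} {j : ℕ} (hj1 : 1 ≤ j)
    (hj : ∀ i' : Fin k, topEl k i' ∈ D' ↔ (i' : ℕ) < j - 1) :
    ∀ i : Fin (k + 1), topEl (k + 1) i ∈ rowL D' ↔ (i : ℕ) < j := by
  intro i
  by_cases hi : (i : ℕ) = 0
  · apply iff_of_true
    · rw [mem_rowL]
      exact Or.inr (by rw [topEl_fst]; exact hi)
    · omega
  · have hi1 : 1 ≤ (i : ℕ) := by omega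
    have hik : (i : ℕ) - 1 < k := by have := i.isLt; omega
    have : topEl (k + 1) i = rowE (topEl k ⟨(i : ℕ) - 1, hik⟩) := by
      rw [rowE_topEl]
      congr 1
      apply Fin.ext
      rw [Fin.val_succ]
      show (i : ℕ) = ((i : ℕ) - 1) + 1
      omega
    rw [this, rowE_mem_rowL, hj]
    show ((i : ℕ) - 1 < j - 1) ↔ ((i : ℕ) < j)
    omega

lemma zero_prefix_of_not_mem {D : Finset (Hk (k + 1))} (hD : isDS D)
    (h0 : topEl (k + 1) 0 ∉ D) :
    ∀ i : Fin (k + 1), topEl (k + 1) i ∈ D ↔ (i : ℕ) < 0 := by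
  intro i
  apply iff_of_false
  · intro hi
    exact h0 (hD _ _ (topEl_mono (by simp)) hi)
  · omega

/-! ### Pair sets -/

noncomputable def PS (m j : ℕ) : Finset ((_ : Finset (Hk m)) × Finset (Hk m)) :=
  ((dsHk m).filter (fun D => ∀ i : Fin m, (topEl m i ∈ D ↔ (i : ℕ) < j))).sigma
    (fun D => (dsHk m).filter fun E => E ⊆ D)

noncomputable def QS (m j : ℕ) : Finset ((_ : Finset (Hk m)) × Finset (Hk m)) :=
  ((dsHk m).filter (fun D => ∀ i : Fin m, (i : ℕ) < j → topEl m i ∈ D)).sigma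
    (fun D => (dsHk m).filter fun E => E ⊆ D)

lemma aH_eq (m j : ℕ) : aH m j = (PS m j).card := by
  unfold aH PS
  rw [Finset.card_sigma]

lemma mem_PS {m j : ℕ} {p : (_ : Finset (Hk m)) × Finset (Hk m)} :
    p ∈ PS m j ↔ isDS p.1 ∧ (∀ i : Fin m, (topEl m i ∈ p.1 ↔ (i : ℕ) < j)) ∧
      isDS p.2 ∧ p.2 ⊆ p.1 := by
  unfold PS
  rw [Finset.mem_sigma, Finset.mem_filter, Finset.mem_filter, mem_dsHk, mem_dsHk]
  tauto

lemma mem_QS {m j : ℕ} {p : (_ : Finset (Hk m)) × Finset (Hk m)} :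
    p ∈ QS m j ↔ isDS p.1 ∧ (∀ i : Fin m, (i : ℕ) < j → topEl m i ∈ p.1) ∧
      isDS p.2 ∧ p.2 ⊆ p.1 := by
  unfold QS
  rw [Finset.mem_sigma, Finset.mem_filter, Finset.mem_filter, mem_dsHk, mem_dsHk]
  tauto

lemma sig_ext {X : Type*} {a c : Finset X} {b d : Finset X}
    (h1 : a = c) (h2 : b = d) :
    (⟨a, b⟩ : (_ : Finset X) × Finset X) = ⟨c, d⟩ := by
  subst h1; subst h2; rfl

/-- Bijection B1: pairs at level `k+1` whose `E` misses the top column correspond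
to pairs at level `k` with a lower bound on the top column of `D`. -/
lemma B1 (k j : ℕ) :
    ((PS (k + 1) j).filter fun p => topEl (k + 1) 0 ∉ p.2).card = (QS k j).card := by
  apply Finset.card_nbij' (i := fun p => ⟨colR p.1, colR p.2⟩)
    (j := fun q => ⟨colL q.1 j, colL q.2 0⟩)
  · intro p hp
    rw [Finset.mem_coe, Finset.mem_filter, mem_PS] at hp
    obtain ⟨⟨hD, hcond, hE, hsub⟩, h0⟩ := hp
    rw [Finset.mem_coe, mem_QS]
    exact ⟨isDS_colR hD, colR_topcond hD hcond, isDS_colR hE, colR_mono hsub⟩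
  · intro q hq
    rw [Finset.mem_coe, mem_QS] at hq
    obtain ⟨hD, hcond, hE, hsub⟩ := hq
    rw [Finset.mem_coe, Finset.mem_filter, mem_PS]
    refine ⟨⟨isDS_colL hD hcond, fun i => topEl_mem_colL i, 
      isDS_colL hE (fun i hi => absurd hi (by omega)), ?_⟩, ?_⟩
    · intro b hb
      rw [mem_colL] at hb ⊢
      rcases hb with ⟨a, ha, rfl⟩ | ⟨_, h⟩
      · exact Or.inl ⟨a, hsub ha, rfl⟩
      · omega
    · rw [topEl_mem_colL]
      omega
  · intro p hp
    rw [Finset.mem_coe, Finset.mem_filter, mem_PS] at hp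
    obtain ⟨⟨hD, hcond, hE, hsub⟩, h0⟩ := hp
    exact sig_ext (colL_colR hD hcond) (colL_colR hE (zero_prefix_of_not_mem hE h0))
  · intro q hq
    exact sig_ext (colR_colL _ _) (colR_colL _ _)

/-- Bijection B2: pairs at level `k+1` whose `E` contains `topEl 0` correspond
to pairs at level `k` with top column count `j - 1`. -/
lemma B2 (k : ℕ) {j : ℕ} (hj : 1 ≤ j) :
    ((PS (k + 1) j).filter fun p => topEl (k + 1) 0 ∈ p.2).card = (PS k (j - 1)).card := by
  apply Finset.card_nbij' (i := fun p => ⟨rowR p.1, rowR p.2⟩)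
    (j := fun q => ⟨rowL q.1, rowL q.2⟩)
  · intro p hp
    rw [Finset.mem_coe, Finset.mem_filter, mem_PS] at hp
    obtain ⟨⟨hD, hcond, hE, hsub⟩, h0⟩ := hp
    rw [Finset.mem_coe, mem_PS]
    exact ⟨isDS_rowR hD, rowR_topcond hj hcond, isDS_rowR hE, rowR_mono hsub⟩
  · intro q hq
    rw [Finset.mem_coe, mem_PS] at hq
    obtain ⟨hD, hcond, hE, hsub⟩ := hq
    rw [Finset.mem_coe, Finset.mem_filter, mem_PS]
    refine ⟨⟨isDS_rowL hD, rowL_topcond hj hcond, isDS_rowL hE, ?_⟩, ?_⟩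
    · intro b hb
      rw [mem_rowL] at hb ⊢
      rcases hb with ⟨a, ha, rfl⟩ | h
      · exact Or.inl ⟨a, hsub ha, rfl⟩
      · exact Or.inr h
    · rw [mem_rowL]
      exact Or.inr (by rw [topEl_fst]; simp)
  · intro p hp
    rw [Finset.mem_coe, Finset.mem_filter, mem_PS] at hp
    obtain ⟨⟨hD, hcond, hE, hsub⟩, h0⟩ := hp
    have hD0 : topEl (k + 1) 0 ∈ p.1 := hsub h0
    exact sig_ext (rowL_rowR hD hD0) (rowL_rowR hE h0)
  · intro q hq
    exact sig_ext (rowR_rowL _) (rowR_rowL _)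

/-! ### top column count -/

noncomputable def tc {m : ℕ} (D : Finset (Hk m)) : ℕ :=
  (Finset.univ.filter fun i : Fin m => topEl m i ∈ D).card

lemma card_filter_lt (m i : ℕ) (h : i ≤ m) :
    (Finset.univ.filter fun x : Fin m => (x : ℕ) < i).card = i := by
  have key : (Finset.univ.filter fun x : Fin m => (x : ℕ) < i).card = (Finset.range i).card := by
    apply Finset.card_nbij (i := fun x : Fin m => (x : ℕ))
    · intro a ha
      rw [Finset.mem_coe, Finset.mem_filter] at ha
      rw [Finset.mem_coe, Finset.mem_range]
      exact ha.2
    · intro a _ b _ hab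
      exact Fin.ext hab
    · intro y hy
      rw [Finset.mem_coe, Finset.mem_range] at hy
      refine ⟨⟨y, by omega⟩, ?_, rfl⟩
      simp only [Finset.coe_filter, Finset.mem_univ, true_and, Set.mem_setOf_eq]
      exact hy
  rw [key, Finset.card_range]

lemma mem_iff_lt_tc {D : Finset (Hk m)} (hD : isDS D) (x : Fin m) :
    topEl m x ∈ D ↔ (x : ℕ) < tc D := by
  constructor
  · intro hx
    have hsub : Finset.Iic x ⊆ Finset.univ.filter fun i => topEl m i ∈ D := by
      intro y hy
      rw [Finset.mem_Iic] at hy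
      rw [Finset.mem_filter]
      exact ⟨Finset.mem_univ _, hD _ _ (topEl_mono hy) hx⟩
    have hca := Finset.card_le_card hsub
    rw [Fin.card_Iic] at hca
    unfold tc
    omega
  · intro hx
    by_contra h'
    have hsub : (Finset.univ.filter fun i : Fin m => topEl m i ∈ D) ⊆ Finset.Iio x := by
      intro y hy
      rw [Finset.mem_filter] at hy
      rw [Finset.mem_Iio]
      by_contra hyx
      push_neg at hyx
      exact h' (hD _ _ (topEl_mono hyx) hy.2)
    have hca := Finset.card_le_card hsub
    rw [Fin.card_Iio] at hca
    unfold tc at hx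
    omega

lemma tc_eq_iff {D : Finset (Hk m)} (hD : isDS D) {i : ℕ} (hi : i ≤ m) :
    tc D = i ↔ ∀ i' : Fin m, (topEl m i' ∈ D ↔ (i' : ℕ) < i) := by
  constructor
  · intro h i'
    rw [mem_iff_lt_tc hD, h]
  · intro h
    unfold tc
    have he : (Finset.univ.filter fun x : Fin m => topEl m x ∈ D) =
        Finset.univ.filter fun x : Fin m => (x : ℕ) < i := by
      ext x
      simp only [Finset.mem_filter, Finset.mem_univ, true_and]
      exact h x
    rw [he, card_filter_lt m i hi]

lemma tc_le (D : Finset (Hk m)) : tc D ≤ m := by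
  have := Finset.card_filter_le (Finset.univ : Finset (Fin m)) (fun i => topEl m i ∈ D)
  simpa [tc] using this

/-- fiberwise decomposition of `QS` -/
lemma L1 {m t : ℕ} (ht : t ≤ m) :
    (QS m t).card = ∑ i ∈ Finset.Icc t m, (PS m i).card := by
  rw [Finset.card_eq_sum_card_fiberwise (f := fun p => tc p.1) (t := Finset.Icc t m) ?_]
  · apply Finset.sum_congr rfl
    intro i hi
    rw [Finset.mem_Icc] at hi
    congr 1
    ext p
    rw [Finset.mem_filter, mem_QS, mem_PS]
    constructor
    · rintro ⟨⟨hD, hcond, hE, hsub⟩, htc⟩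
      exact ⟨hD, (tc_eq_iff hD hi.2).mp htc, hE, hsub⟩
    · rintro ⟨hD, hcond, hE, hsub⟩
      refine ⟨⟨hD, fun i' hi' => (hcond i').mpr (by omega), hE, hsub⟩,
        (tc_eq_iff hD hi.2).mpr hcond⟩
  · intro p hp
    rw [Finset.mem_coe, mem_QS] at hp
    obtain ⟨hD, hcond, _, _⟩ := hp
    rw [Finset.mem_coe, Finset.mem_Icc]
    refine ⟨?_, tc_le _⟩
    have hsub : (Finset.univ.filter fun x : Fin m => (x : ℕ) < t) ⊆
        Finset.univ.filter fun i : Fin m => topEl m i ∈ p.1 := by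
      intro x hx
      rw [Finset.mem_filter] at hx ⊢
      exact ⟨Finset.mem_univ _, hcond x hx.2⟩
    have := Finset.card_le_card hsub
    rw [card_filter_lt m t ht] at this
    exact le_trans this (le_of_eq rfl)

/-! ### order homs and pairs -/

noncomputable def pairsEquiv (m : ℕ) :
    (Hk m →o Fin 3) ≃ {p : (_ : Finset (Hk m)) × Finset (Hk m) // p ∈ QS m 0} where
  toFun f := ⟨⟨Finset.univ.filter fun a => f a ≤ 1, Finset.univ.filter fun a => f a = 0⟩, by
    rw [mem_QS]
    refine ⟨?_, by omega, ?_, ?_⟩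
    · intro a b hab hb
      simp only [Finset.mem_filter, Finset.mem_univ, true_and] at hb ⊢
      exact le_trans (f.monotone hab) hb
    · intro a b hab hb
      simp only [Finset.mem_filter, Finset.mem_univ, true_and] at hb ⊢
      have : f a ≤ f b := f.monotone hab
      rw [hb] at this
      exact Fin.le_zero_iff.mp this
    · intro a ha
      simp only [Finset.mem_filter, Finset.mem_univ, true_and] at ha ⊢
      rw [ha]
      decide⟩
  invFun q := ⟨fun a => if a ∈ q.1.2 then 0 else if a ∈ q.1.1 then 1 else 2, by
    have hq := mem_QS.mp q.2
    obtain ⟨hD, _, hE, hsub⟩ := hq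
    intro a b hab
    by_cases hbE : b ∈ q.1.2
    · have haE : a ∈ q.1.2 := hE a b hab hbE
      simp [haE, hbE]
    · by_cases hbD : b ∈ q.1.1
      · have haD : a ∈ q.1.1 := hD a b hab hbD
        by_cases haE : a ∈ q.1.2
        · simp [haE, haD, hbE, hbD]
        · simp [haE, haD, hbE, hbD]
      · simp only [hbE, hbD, if_false]
        have : ∀ x : Fin 3, x ≤ 2 := by decide
        apply this⟩
  left_inv f := by
    apply OrderHom.ext
    funext a
    simp only [OrderHom.coe_mk, Finset.mem_filter, Finset.mem_univ, true_and]
    have h3 := (f a).isLt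
    split_ifs with h1 h2
    · exact h1.symm
    · rw [Fin.ext_iff] at h1 ⊢
      rw [Fin.le_def] at h2
      simp only [Fin.val_one] at h2 ⊢
      simp only [Fin.val_zero] at h1
      omega
    · rw [Fin.ext_iff]
      rw [Fin.le_def] at h2
      rw [Fin.ext_iff] at h1
      simp only [Fin.val_one] at h2
      simp only [Fin.val_zero] at h1
      show (2 : ℕ) % 3 = (f a : ℕ)
      omega
  right_inv q := by
    apply Subtype.ext
    have hq := mem_QS.mp q.2
    obtain ⟨hD, _, hE, hsub⟩ := hq
    have h1 : (Finset.univ.filter fun a =>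
        (if a ∈ q.1.2 then (0 : Fin 3) else if a ∈ q.1.1 then 1 else 2) ≤ 1) = q.1.1 := by
      ext a
      simp only [Finset.mem_filter, Finset.mem_univ, true_and]
      by_cases haE : a ∈ q.1.2
      · rw [if_pos haE]
        exact iff_of_true (by decide) (hsub haE)
      · by_cases haD : a ∈ q.1.1
        · rw [if_neg haE, if_pos haD]
          exact iff_of_true (by decide) haD
        · rw [if_neg haE, if_neg haD]
          exact iff_of_false (by decide) haD
    have h2 : (Finset.univ.filter fun a =>
        (if a ∈ q.1.2 then (0 : Fin 3) else if a ∈ q.1.1 then 1 else 2) = 0) = q.1.2 := by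
      ext a
      simp only [Finset.mem_filter, Finset.mem_univ, true_and]
      by_cases haE : a ∈ q.1.2
      · rw [if_pos haE]
        exact iff_of_true rfl haE
      · by_cases haD : a ∈ q.1.1
        · rw [if_neg haE, if_pos haD]
          exact iff_of_false (by decide) haE
        · rw [if_neg haE, if_neg haD]
          exact iff_of_false (by decide) haE
    show (⟨_, _⟩ : (_ : Finset (Hk m)) × Finset (Hk m)) = q.1
    rw [show q.1 = ⟨q.1.1, q.1.2⟩ from rfl]
    exact sig_ext h1 h2

lemma card_hom (m : ℕ) : Nat.card (Hk m →o Fin 3) = (QS m 0).card := by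
  rw [Nat.card_congr (pairsEquiv m), Nat.card_eq_fintype_card, Fintype.card_coe]

/-! ### counting down-sets -/

lemma S1 (k : ℕ) :
    ((dsHk (k + 1)).filter fun D => topEl (k + 1) 0 ∉ D).card = (dsHk k).card := by
  apply Finset.card_nbij' (i := fun D => colR D) (j := fun E => colL E 0)
  · intro D hD
    rw [Finset.mem_coe, Finset.mem_filter, mem_dsHk] at hD
    rw [Finset.mem_coe, mem_dsHk]
    exact isDS_colR hD.1
  · intro E hE
    rw [Finset.mem_coe, mem_dsHk] at hE
    rw [Finset.mem_coe, Finset.mem_filter, mem_dsHk]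
    refine ⟨isDS_colL hE (fun i hi => absurd hi (by omega)), ?_⟩
    rw [topEl_mem_colL]
    omega
  · intro D hD
    rw [Finset.mem_coe, Finset.mem_filter, mem_dsHk] at hD
    exact colL_colR hD.1 (zero_prefix_of_not_mem hD.1 hD.2)
  · intro E _
    exact colR_colL _ _

lemma S2 (k : ℕ) :
    ((dsHk (k + 1)).filter fun D => topEl (k + 1) 0 ∈ D).card = (dsHk k).card := by
  apply Finset.card_nbij' (i := fun D => rowR D) (j := fun E => rowL E)
  · intro D hD
    rw [Finset.mem_coe, Finset.mem_filter, mem_dsHk] at hD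
    rw [Finset.mem_coe, mem_dsHk]
    exact isDS_rowR hD.1
  · intro E hE
    rw [Finset.mem_coe, mem_dsHk] at hE
    rw [Finset.mem_coe, Finset.mem_filter, mem_dsHk]
    refine ⟨isDS_rowL hE, ?_⟩
    rw [mem_rowL]
    exact Or.inr (by rw [topEl_fst]; simp)
  · intro D hD
    rw [Finset.mem_coe, Finset.mem_filter, mem_dsHk] at hD
    exact rowL_rowR hD.1 hD.2
  · intro E _
    exact rowR_rowL _

instance : IsEmpty (Hk 0) := ⟨fun a => a.1.1.elim0⟩

lemma card_dsHk : ∀ k : ℕ, (dsHk k).card = 2 ^ k := by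
  intro k
  induction k with
  | zero =>
    have : dsHk 0 = Finset.univ := by
      ext D
      simp only [Finset.mem_univ, iff_true]
      rw [mem_dsHk]
      intro a
      exact isEmptyElim a
    rw [this, Finset.card_univ, Fintype.card_finset]
    simp
  | succ k ih =>
    have hsplit := Finset.card_filter_add_card_filter_not
      (s := dsHk (k + 1)) (p := fun D => topEl (k + 1) 0 ∈ D)
    rw [S2 k] at hsplit
    have := S1 k
    rw [this] at hsplit
    rw [← hsplit, ih]
    ring

lemma filter_top (k : ℕ) :
    ((dsHk k).filter fun D => ∀ i : Fin k, (topEl k i ∈ D ↔ (i : ℕ) < k)) = {Finset.univ} := by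
  ext D
  rw [Finset.mem_filter, mem_dsHk, Finset.mem_singleton]
  constructor
  · rintro ⟨hD, hcond⟩
    apply Finset.eq_univ_of_forall
    intro b
    exact hD _ _ (le_topEl b) ((hcond b.1.1).mpr b.1.1.isLt)
  · rintro rfl
    exact ⟨fun _ _ _ _ => Finset.mem_univ _, fun i => iff_of_true (Finset.mem_univ _) i.isLt⟩

lemma aH_top (k : ℕ) : aH k k = 2 ^ k := by
  unfold aH
  rw [filter_top, Finset.sum_singleton,
    Finset.filter_true_of_mem (fun E _ => Finset.subset_univ E), card_dsHk]

end Aux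

theorem stmt9 :
    aH 1 0 = 1 ∧ aH 1 1 = 2 ∧
    ∀ k : ℕ, 2 ≤ k →
      aH k 0 = Nat.card (Hk (k - 1) →o Fin 3)
      ∧ aH k 1 = Nat.card (Hk (k - 1) →o Fin 3)
      ∧ (∀ j : ℕ, 1 ≤ j → j ≤ k - 1 →
          aH k j = ∑ i ∈ Finset.Icc (j - 1) (k - 1), aH (k - 1) i)
      ∧ aH k k = 2 ^ k := by
  have base0 : aH 1 0 = 1 := by
    have hone : ∀ a : Hk 1, a = topEl 1 0 := by
      intro a
      apply hk_ext
      · rw [topEl_fst]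
        have := a.1.1.isLt
        simp only [Fin.val_zero]
        omega
      · rw [topEl_snd]
        have := a.1.2.isLt
        omega
    have hfil : ((dsHk 1).filter fun D => ∀ i : Fin 1, (topEl 1 i ∈ D ↔ (i : ℕ) < 0)) = {∅} := by
      ext D
      rw [Finset.mem_filter, mem_dsHk, Finset.mem_singleton]
      constructor
      · rintro ⟨_, hcond⟩
        rw [Finset.eq_empty_iff_forall_notMem]
        intro a ha
        rw [hone a] at ha
        have := (hcond 0).mp ha
        omega
      · rintro rfl
        refine ⟨fun a b _ hb => absurd hb (Finset.notMem_empty _), fun i =>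
          iff_of_false (Finset.notMem_empty _) (by omega)⟩
    have hfil2 : ((dsHk 1).filter fun E => E ⊆ (∅ : Finset (Hk 1))) = {∅} := by
      ext E
      rw [Finset.mem_filter, mem_dsHk, Finset.mem_singleton]
      constructor
      · rintro ⟨_, hE⟩
        exact Finset.subset_empty.mp hE
      · rintro rfl
        exact ⟨fun a b _ hb => absurd hb (Finset.notMem_empty _), Finset.Subset.refl _⟩
    unfold aH
    rw [hfil, Finset.sum_singleton, hfil2, Finset.card_singleton]
  have base1 : aH 1 1 = 2 := by
    have := aH_top 1
    simpa using this
  refine ⟨base0, base1, ?_⟩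
  intro k hk
  obtain ⟨m, rfl⟩ : ∃ m, k = m + 1 := ⟨k - 1, by omega⟩
  have hm : 1 ≤ m := by omega
  have hm1 : m + 1 - 1 = m := rfl
  have hrec : ∀ j, 1 ≤ j → j ≤ m → aH (m + 1) j = ∑ i ∈ Finset.Icc (j - 1) m, aH m i := by
    intro j hj1 hjm
    rw [aH_eq,
      ← Finset.card_filter_add_card_filter_not (s := PS (m + 1) j)
        (p := fun p => topEl (m + 1) 0 ∈ p.2),
      B2 m hj1, B1 m j, L1 hjm]
    rw [show Finset.Icc (j - 1) m = insert (j - 1) (Finset.Icc j m) by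
      ext x; rw [Finset.mem_Icc, Finset.mem_insert, Finset.mem_Icc]; omega]
    rw [Finset.sum_insert (by rw [Finset.mem_Icc]; omega)]
    simp only [aH_eq]
  refine ⟨?_, ?_, ?_, ?_⟩
  · rw [hm1, card_hom m, aH_eq, ← B1 m 0, Finset.filter_true_of_mem]
    intro p hp
    rw [mem_PS] at hp
    obtain ⟨_, hcond, _, hsub⟩ := hp
    intro hmem
    have := (hcond 0).mp (hsub hmem)
    omega
  · rw [hm1, card_hom m, hrec 1 le_rfl hm]
    rw [L1 (Nat.zero_le m)]
    simp only [aH_eq]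
  · intro j hj1 hjm
    rw [hm1] at hjm ⊢
    exact hrec j hj1 hjm
  · exact aH_top (m + 1)
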